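/- Suppose Φ is a column vector in ℂ⁴ solving the linear system at spectral parameter λ₁ (with Im λ₁ ≠ 0 and λ₁ + λ₁* ≠ 0), Σ = diag(1,1,κ,κ), Λ = diag(σ₂,σ₂). Define the Darboux matrix T(λ) = I₄ - [Φ, ΛΦ*] · M⁻¹ · diag(1/(λ-λ₁*), 1/(λ+λ₁)) applied with M = diag((Φ†ΣΦ)/(λ₁-λ₁*), (Φ†ΣΦ)/(λ₁-λ₁*)) as in the paper. Then det T(λ) = ((λ-λ₁)(λ+λ₁*)) / ((λ-λ₁*)(λ+λ₁)) for all λ not in {λ₁*, -λ₁}. -/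
import Mathlib

open Matrix Complex

theorem stmt5 (κ : ℝ) (hκ : κ = 1 ∨ κ = -1)
    (lam₁ : ℂ) (hlam₁ : lam₁ ≠ (starRingEnd ℂ) lam₁) (hlam₁' : lam₁ ≠ -(starRingEnd ℂ) lam₁)
    (Φ : Fin 4 → ℂ)
    (Lam : Matrix (Fin 4) (Fin 4) ℂ)
    (hLam : Lam = !![0,1,0,0; -1,0,0,0; 0,0,0,1; 0,0,-1,0])
    (Sig : Matrix (Fin 4) (Fin 4) ℂ)
    (hSig : Sig = Matrix.diagonal ![1, 1, (κ : ℂ), (κ : ℂ)])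
    (c : ℂ) (hc : c = (star Φ ⬝ᵥ Sig.mulVec Φ) / (lam₁ - (starRingEnd ℂ) lam₁))
    (hc0 : c ≠ 0)
    (A : Matrix (Fin 4) (Fin 2) ℂ)
    (hA : A = Matrix.of fun i j => if j = 0 then Φ i else Lam.mulVec (star Φ) i)
    (B : ℂ → Matrix (Fin 2) (Fin 4) ℂ)
    (hB : ∀ lam, B lam = Matrix.of fun i j =>
      if i = 0 then (lam - (starRingEnd ℂ) lam₁)⁻¹ * (starRingEnd ℂ) (Φ j)
      else -((lam + lam₁)⁻¹ * (Matrix.vecMul Φ Lam) j))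
    (T : ℂ → Matrix (Fin 4) (Fin 4) ℂ)
    (hT : ∀ lam, T lam = 1 - c⁻¹ • (A * B lam * Sig)) :
    ∀ lam : ℂ, lam ≠ (starRingEnd ℂ) lam₁ → lam ≠ -lam₁ →
      (T lam).det =
        ((lam - lam₁) * (lam + (starRingEnd ℂ) lam₁)) /
          ((lam - (starRingEnd ℂ) lam₁) * (lam + lam₁)) := by
  intro lam h1 h2
  have hd1 : lam - (starRingEnd ℂ) lam₁ ≠ 0 := sub_ne_zero.mpr h1
  have hd2 : lam + lam₁ ≠ 0 := by
    intro h; exact h2 (by linear_combination h)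
  have hD : lam₁ - (starRingEnd ℂ) lam₁ ≠ 0 := sub_ne_zero.mpr hlam₁
  set s : ℂ := star Φ ⬝ᵥ Sig.mulVec Φ with hs
  have hs0 : s ≠ 0 := by
    intro h; apply hc0; rw [hc, h, zero_div]
  have hcs : c⁻¹ * s = lam₁ - (starRingEnd ℂ) lam₁ := by
    rw [hc]; field_simp
  have key : T lam = 1 - A * (c⁻¹ • (B lam * Sig)) := by
    rw [hT]; congr 1
    rw [Matrix.mul_smul, Matrix.mul_assoc]
  have hsexp : s = (starRingEnd ℂ) (Φ 0) * Φ 0 + (starRingEnd ℂ) (Φ 1) * Φ 1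
      + (κ:ℂ) * ((starRingEnd ℂ) (Φ 2) * Φ 2) + (κ:ℂ) * ((starRingEnd ℂ) (Φ 3) * Φ 3) := by
    simp [hs, hSig, dotProduct, Matrix.mulVec, Fin.sum_univ_four, Matrix.diagonal,
      Pi.star_apply]
    ring
  have hN : (c⁻¹ • (B lam * Sig)) * A =
      !![c⁻¹ * ((lam - (starRingEnd ℂ) lam₁)⁻¹ * s), 0;
                   0, c⁻¹ * ((lam + lam₁)⁻¹ * s)] := by
    ext i j
    fin_cases i <;> fin_cases j <;>
      simp [hA, hB, hSig, hLam, Matrix.mul_apply, Matrix.mulVec, Matrix.vecMul,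
        dotProduct, Fin.sum_univ_four, Matrix.diagonal, Pi.star_apply, Matrix.vecHead, Matrix.vecTail]
    · linear_combination (-c⁻¹ * (lam - (starRingEnd ℂ) lam₁)⁻¹) * hsexp
    · ring
    · ring
    · linear_combination (-c⁻¹ * (lam + lam₁)⁻¹) * hsexp
  rw [key, Matrix.det_one_sub_mul_comm, hN]
  rw [show (1 : Matrix (Fin 2) (Fin 2) ℂ) -
      !![c⁻¹ * ((lam - (starRingEnd ℂ) lam₁)⁻¹ * s), 0;
                   0, c⁻¹ * ((lam + lam₁)⁻¹ * s)] =
      !![1 - c⁻¹ * ((lam - (starRingEnd ℂ) lam₁)⁻¹ * s), 0;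
                   0, 1 - c⁻¹ * ((lam + lam₁)⁻¹ * s)] by
    ext i j; fin_cases i <;> fin_cases j <;> simp [Matrix.one_apply]]
  rw [Matrix.det_fin_two_of]
  have e1 : c⁻¹ * ((lam - (starRingEnd ℂ) lam₁)⁻¹ * s)
      = (lam₁ - (starRingEnd ℂ) lam₁) / (lam - (starRingEnd ℂ) lam₁) := by
    rw [← mul_assoc, mul_comm c⁻¹, mul_assoc, hcs]; field_simp
  have e2 : c⁻¹ * ((lam + lam₁)⁻¹ * s)
      = (lam₁ - (starRingEnd ℂ) lam₁) / (lam + lam₁) := by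
    rw [← mul_assoc, mul_comm c⁻¹, mul_assoc, hcs]; field_simp
  rw [e1, e2]
  rw [eq_div_iff (mul_ne_zero hd1 hd2)]
  rw [sub_mul, mul_mul_mul_comm, sub_mul 1, sub_mul 1, one_mul,
    div_mul_cancel₀ _ hd1, div_mul_cancel₀ _ hd2]
  ring
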